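/- The graceful chromatic number of the complete graph K_8 is 14; a graceful 14-coloring is given by assigning the eight vertices the colors 1, 2, 4, 5, 10, 11, 13, 14. -/

import Mathlib

/-- The induced edge coloring `g*(ab) = |g a - g b|` is proper: any two edges sharing a
vertex receive distinct values. -/
def GracefulEdgeProper {V : Type*} (G : SimpleGraph V) (g : V → ℕ) : Prop :=
  ∀ a b c : V, G.Adj a b → G.Adj a c → b ≠ c →
    Nat.dist (g a) (g b) ≠ Nat.dist (g a) (g c)

/-- A graceful coloring: a proper vertex coloring by positive integers whose induced
edge coloring is proper. -/
def IsGracefulColoring {V : Type*} (G : SimpleGraph V) (g : V → ℕ) : Prop :=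
  (∀ v, 1 ≤ g v) ∧ (∀ a b : V, G.Adj a b → g a ≠ g b) ∧ GracefulEdgeProper G g

/-- A graceful `l`-coloring: a proper vertex coloring with colors in `{1, …, l}` whose
induced edge coloring is proper. -/
def IsGracefulLColoring {V : Type*} (G : SimpleGraph V) (l : ℕ) (g : V → ℕ) : Prop :=
  (∀ v, g v ∈ Finset.Icc 1 l) ∧ (∀ a b : V, G.Adj a b → g a ≠ g b) ∧ GracefulEdgeProper G g

/-- The graceful chromatic number: the least `l ≥ 2` admitting a graceful `l`-coloring. -/
noncomputable def gracefulChromaticNumber {V : Type*} (G : SimpleGraph V) : ℕ :=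
  sInf {l | 2 ≤ l ∧ ∃ g : V → ℕ, IsGracefulLColoring G l g}

/-- A finite set of naturals is 3-AP-free: no three distinct elements `a, b, c`
with `b - a = c - b`. -/
def ThreeAPFreeSet (S : Finset ℕ) : Prop :=
  ∀ a ∈ S, ∀ b ∈ S, ∀ c ∈ S, a ≠ b → b ≠ c → a ≠ c → (b : ℤ) - (a : ℤ) ≠ (c : ℤ) - (b : ℤ)

/-- boolean check for a 3-term AP in a list -/
def apCheck (l : List ℕ) : Bool :=
  l.any fun a => l.any fun b => l.any fun c =>
    a < b && b < c && a + c == 2 * b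

set_option maxRecDepth 4000 in
lemma apCheck_all : ((List.range' 1 13).sublistsLen 8).all apCheck = true := by decide

/-- Every 8-element subset of `{1, …, 13}` contains a 3-term AP. -/
lemma exists_ap (S : Finset ℕ) (hsub : S ⊆ Finset.Icc 1 13) (hcard : S.card = 8) :
    ∃ a ∈ S, ∃ b ∈ S, ∃ c ∈ S, a < b ∧ b < c ∧ a + c = 2 * b := by
  set L := S.sort (· ≤ ·) with hL
  have hnodup : L.Nodup := S.sort_nodup _
  have hsorted : L.Pairwise (· ≤ ·) := S.pairwise_sort _
  have hmem : ∀ x, x ∈ L ↔ x ∈ S := fun x => S.mem_sort _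
  have hlen : L.length = 8 := by rw [hL, Finset.length_sort, hcard]
  have hsub' : L ⊆ List.range' 1 13 := by
    intro x hx
    have := hsub ((hmem x).1 hx)
    rw [Finset.mem_Icc] at this
    rw [List.mem_range'_1]
    omega
  have hsl : L.Sublist (List.range' 1 13) := by
    refine List.sublist_of_subperm_of_pairwise (hnodup.subperm hsub') hsorted ?_
    decide
  have hmemL : L ∈ (List.range' 1 13).sublistsLen 8 := by
    rw [List.mem_sublistsLen]
    exact ⟨hsl, hlen⟩
  have := List.all_eq_true.1 apCheck_all L hmemL
  simp only [apCheck, List.any_eq_true, Bool.and_eq_true, decide_eq_true_eq,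
    beq_iff_eq] at this
  obtain ⟨a, ha, b, hb, c, hc, ⟨hab, hbc⟩, habc⟩ := this
  exact ⟨a, (hmem a).1 ha, b, (hmem b).1 hb, c, (hmem c).1 hc, hab, hbc, habc⟩

lemma upper_bound :
    IsGracefulLColoring (⊤ : SimpleGraph (Fin 8)) 14 ![1, 2, 4, 5, 10, 11, 13, 14] := by
  refine ⟨by decide, ?_, ?_⟩
  · intro a b hab
    rw [SimpleGraph.top_adj] at hab
    revert hab
    revert a b
    decide
  · intro a b c hab hac hbc
    rw [SimpleGraph.top_adj] at hab hac
    revert hab hac hbc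
    revert a b c
    decide

lemma lower_bound (l : ℕ) (g : Fin 8 → ℕ)
    (h : IsGracefulLColoring (⊤ : SimpleGraph (Fin 8)) l g) : 14 ≤ l := by
  obtain ⟨hrange, hproper, hedge⟩ := h
  by_contra hlt
  push_neg at hlt
  have hl13 : l ≤ 13 := by omega
  have hinj : Function.Injective g := by
    intro a b hab
    by_contra hne
    exact hproper a b ((SimpleGraph.top_adj a b).2 hne) hab
  set S : Finset ℕ := Finset.image g Finset.univ with hS
  have hcard : S.card = 8 := by
    rw [hS, Finset.card_image_of_injective _ hinj, Finset.card_univ, Fintype.card_fin]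
  have hsub : S ⊆ Finset.Icc 1 13 := by
    intro x hx
    rw [hS, Finset.mem_image] at hx
    obtain ⟨v, _, rfl⟩ := hx
    have := hrange v
    rw [Finset.mem_Icc] at this ⊢
    omega
  obtain ⟨a, ha, b, hb, c, hc, hab, hbc, habc⟩ := exists_ap S hsub hcard
  rw [hS, Finset.mem_image] at ha hb hc
  obtain ⟨u, _, rfl⟩ := ha
  obtain ⟨v, _, rfl⟩ := hb
  obtain ⟨w, _, rfl⟩ := hc
  have huv : v ≠ u := fun h => by rw [h] at hab; omega
  have hvw : v ≠ w := fun h => by rw [h] at hbc; omega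
  have huw : u ≠ w := fun h => by rw [h] at hab; omega
  refine hedge v u w ((SimpleGraph.top_adj v u).2 huv) ((SimpleGraph.top_adj v w).2 hvw) huw ?_
  simp only [Nat.dist]
  omega

theorem gracefulChromatic_K8 :
    gracefulChromaticNumber (⊤ : SimpleGraph (Fin 8)) = 14 ∧
      IsGracefulLColoring (⊤ : SimpleGraph (Fin 8)) 14 ![1, 2, 4, 5, 10, 11, 13, 14] := by
  have h14 : 14 ∈ {l | 2 ≤ l ∧ ∃ g : Fin 8 → ℕ,
      IsGracefulLColoring (⊤ : SimpleGraph (Fin 8)) l g} :=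
    ⟨by norm_num, _, upper_bound⟩
  refine ⟨le_antisymm (Nat.sInf_le h14) ?_, upper_bound⟩
  have hmem := Nat.sInf_mem (⟨14, h14⟩ : Set.Nonempty _)
  obtain ⟨-, g, hg⟩ := hmem
  exact lower_bound _ g hg
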